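/- Let m ≥ 1, A ∈ {0,1}^{m×n} a binary matrix, b ∈ ℕ₊^m a vector of positive integers, and W ≥ 1 with W ≤ b_i for all i ∈ [m]. Let f : 2^[n] → ℝ₊ be a normalized monotone submodular set function and set λ = e^{W+1}·m. Let ∅ = S_0 ⊂ S_1 ⊂ ⋯ ⊂ S_t ⊆ [n] be a chain with S_ℓ = S_{ℓ−1} ∪ {γ_ℓ}, γ_ℓ ∉ S_{ℓ−1}, and define weights w_{iℓ} = (1/b_i)·λ^{(Σ_{j∈S_ℓ} A_{ij})/(b_i+1)} (so w_{i0} = 1/b_i). Assume for every ℓ ∈ {1,…,t}: (i) δ_ℓ := f(S_ℓ) − f(S_{ℓ−1}) > 0, and (ii) f_{S_{ℓ−1}}(j) · Σ_{i=1}^m A_{iγ_ℓ} w_{i(ℓ−1)} ≤ δ_ℓ · Σ_{i=1}^m A_{ij} w_{i(ℓ−1)} for every j ∈ [n]∖S_{ℓ−1}. Let S* ⊆ [n] be feasible (Σ_{j∈S*} A_{ij} ≤ b_i for all i) with f(S*) > f(S_t). If Σ_{i=1}^m b_i w_{it} ≥ e^{W+1}·m, then f(S_t) ≥ f(S*) /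 (e·m^{1/(W+1)} + 1). -/

import Mathlib

set_option maxHeartbeats 1000000

/-- Submodularity: marginal gains bound the union gain. -/
lemma aux_submod {n : ℕ} (f : Finset (Fin n) → ℝ)
    (hf_mono : ∀ S T : Finset (Fin n), S ⊆ T → f S ≤ f T)
    (hf_submod : ∀ S T : Finset (Fin n), f (S ∪ T) + f (S ∩ T) ≤ f S + f T)
    (S : Finset (Fin n)) :
    ∀ U : Finset (Fin n), f (S ∪ U) ≤ f S + ∑ j ∈ U, (f (insert j S) - f S) := by
  intro U
  induction U using Finset.induction_on with
  | empty => simp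
  | insert _ _ ha ih =>
    rename_i a U'
    have h1 : S ∪ insert a U' = (S ∪ U') ∪ insert a S := by
      ext x; simp [Finset.mem_union, Finset.mem_insert]; tauto
    have h2 := hf_submod (S ∪ U') (insert a S)
    have h3 : S ⊆ (S ∪ U') ∩ insert a S := by
      intro x hx; simp [Finset.mem_inter, Finset.mem_union, Finset.mem_insert]; tauto
    have h4 := hf_mono _ _ h3
    rw [Finset.sum_insert ha]
    rw [h1]
    linarith

/-- Convexity chord bound for rpow. -/
lemma aux_chord (u s s₀ : ℝ) (hu : 0 ≤ u) (hs : 0 < s) (hss : s ≤ s₀) :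
    Real.exp (u * s) - 1 ≤ (s / s₀) * (Real.exp (u * s₀) - 1) := by
  have hs₀ : 0 < s₀ := lt_of_lt_of_le hs hss
  have key := convexOn_exp.2 (Set.mem_univ (0:ℝ)) (Set.mem_univ (u * s₀))
      (by
        have : s/s₀ ≤ 1 := by rw [div_le_one hs₀]; exact hss
        linarith : (0:ℝ) ≤ 1 - s/s₀)
      (by positivity : (0:ℝ) ≤ s/s₀) (by ring)
  simp only [smul_eq_mul, mul_zero, zero_add, Real.exp_zero, mul_one] at key
  have heq : s/s₀ * (u * s₀) = u * s := by field_simp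
  rw [heq] at key
  have hexp : (s/s₀) * (Real.exp (u * s₀) - 1) = s/s₀ * Real.exp (u * s₀) - s/s₀ := by ring
  rw [hexp]
  linarith

/-- Key pointwise bound. -/
lemma aux_key (lam W B : ℝ) (hW : 1 ≤ W) (hlam : 1 ≤ lam) (hB : W ≤ B) :
    B * (lam ^ (1/(B+1)) - 1) ≤ (W+1) * lam ^ (1/(W+1)) := by
  have hlam0 : (0:ℝ) < lam := by linarith
  have hB1 : (0:ℝ) < B + 1 := by linarith
  have hW1 : (0:ℝ) < W + 1 := by linarith
  have hu : 0 ≤ Real.log lam := Real.log_nonneg hlam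
  have hs : (0:ℝ) < 1/(B+1) := by positivity
  have hss : 1/(B+1) ≤ 1/(W+1) := by
    apply one_div_le_one_div_of_le hW1; linarith
  have hrw : ∀ x : ℝ, lam ^ x = Real.exp (Real.log lam * x) := fun x => by
    rw [Real.rpow_def_of_pos hlam0]
  have hch := aux_chord (Real.log lam) (1/(B+1)) (1/(W+1)) hu hs hss
  rw [← hrw, ← hrw] at hch
  have hB0 : (0:ℝ) ≤ B := by linarith
  have h1 : B * (lam ^ (1/(B+1)) - 1) ≤ B * ((1/(B+1))/(1/(W+1)) * (lam ^ (1/(W+1)) - 1)) :=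
    mul_le_mul_of_nonneg_left hch hB0
  have h2 : B * ((1/(B+1))/(1/(W+1)) * (lam ^ (1/(W+1)) - 1))
      = (B/(B+1)) * ((W+1) * (lam ^ (1/(W+1)) - 1)) := by
    field_simp
  have hpow1 : (1:ℝ) ≤ lam ^ (1/(W+1)) := Real.one_le_rpow hlam (le_of_lt (by positivity))
  have h3 : B/(B+1) ≤ 1 := by rw [div_le_one hB1]; linarith
  have h4 : (0:ℝ) ≤ (W+1) * (lam ^ (1/(W+1)) - 1) := by nlinarith
  have h5 : (B/(B+1)) * ((W+1) * (lam ^ (1/(W+1)) - 1)) ≤ (W+1) * (lam ^ (1/(W+1)) - 1) :=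
    mul_le_of_le_one_left h4 h3
  nlinarith



/-- Approximation lemma for the modified multiplicative-updates
algorithm in the binary setting, with update factor `λ = e^{W+1}·m` and weights
`w_{iℓ} = (1/b_i)·λ^{(Σ_{j∈S_ℓ} A_{ij})/(b_i+1)}`: if the loop terminates with
`Σ_i b_i w_{it} ≥ e^{W+1}·m` and `S*` is feasible with `f(S*) > f(S_t)`, then
`f(S_t) ≥ f(S*) / (e·m^{1/(W+1)} + 1)`. -/
theorem stmt_6 (m n t : ℕ) (hm : 1 ≤ m)
    (A : Fin m → Fin n → ℝ) (hA : ∀ i j, A i j = 0 ∨ A i j = 1)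
    (b : Fin m → ℕ) (hb : ∀ i, 1 ≤ b i)
    (W : ℝ) (hW : 1 ≤ W) (hwidth : ∀ i, W ≤ (b i : ℝ))
    (f : Finset (Fin n) → ℝ)
    (hf_nonneg : ∀ S, 0 ≤ f S)
    (hf_norm : f ∅ = 0)
    (hf_mono : ∀ S T : Finset (Fin n), S ⊆ T → f S ≤ f T)
    (hf_submod : ∀ S T : Finset (Fin n), f (S ∪ T) + f (S ∩ T) ≤ f S + f T)
    (lam : ℝ) (hlam : lam = Real.exp (W + 1) * m)
    (S : ℕ → Finset (Fin n)) (γ : ℕ → Fin n)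
    (hS0 : S 0 = ∅)
    (hchain : ∀ ℓ, 1 ≤ ℓ → ℓ ≤ t →
      γ ℓ ∉ S (ℓ - 1) ∧ S ℓ = insert (γ ℓ) (S (ℓ - 1)))
    (w : Fin m → ℕ → ℝ)
    (hw : ∀ i ℓ, w i ℓ = (1 / (b i : ℝ)) * lam ^ ((∑ j ∈ S ℓ, A i j) / ((b i : ℝ) + 1)))
    (hδ : ∀ ℓ, 1 ≤ ℓ → ℓ ≤ t → 0 < f (S ℓ) - f (S (ℓ - 1)))
    (hgreedy : ∀ ℓ, 1 ≤ ℓ → ℓ ≤ t → ∀ j : Fin n, j ∉ S (ℓ - 1) →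
      (f (insert j (S (ℓ - 1))) - f (S (ℓ - 1))) * ∑ i, A i (γ ℓ) * w i (ℓ - 1)
        ≤ (f (S ℓ) - f (S (ℓ - 1))) * ∑ i, A i j * w i (ℓ - 1))
    (Sstar : Finset (Fin n))
    (hfeas : ∀ i, ∑ j ∈ Sstar, A i j ≤ (b i : ℝ))
    (hopt : f (S t) < f Sstar)
    (hterm : Real.exp (W + 1) * m ≤ ∑ i, (b i : ℝ) * w i t) :
    f (S t) ≥ f Sstar / (Real.exp 1 * (m : ℝ) ^ (1 / (W + 1)) + 1) := by
  -- basic positivity facts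
  have hm0 : (0:ℝ) < m := by exact_mod_cast Nat.lt_of_lt_of_le Nat.zero_lt_one hm
  have hm1 : (1:ℝ) ≤ m := by exact_mod_cast hm
  have hW1 : (0:ℝ) < W + 1 := by linarith
  have hlam1 : (1:ℝ) ≤ lam := by
    rw [hlam]
    have h1 : (1:ℝ) ≤ Real.exp (W + 1) := Real.one_le_exp (by linarith)
    nlinarith
  have hlam0 : (0:ℝ) < lam := by linarith
  have hb0 : ∀ i, (0:ℝ) < b i := fun i => by exact_mod_cast hb i
  have hA0 : ∀ i j, 0 ≤ A i j := fun i j => by rcases hA i j with h | h <;> rw [h] <;> norm_num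
  have hw_pos : ∀ i ℓ, 0 < w i ℓ := fun i ℓ => by
    rw [hw]
    exact mul_pos (one_div_pos.mpr (hb0 i)) (Real.rpow_pos_of_pos hlam0 _)
  set c : ℝ := Real.exp 1 * (m:ℝ) ^ (1/(W+1)) with hc
  have hc0 : 0 < c := by positivity
  have hlam_rpow : lam ^ (1/(W+1)) = c := by
    rw [hlam, Real.mul_rpow (le_of_lt (Real.exp_pos _)) (le_of_lt hm0),
      Real.rpow_def_of_pos (Real.exp_pos _), Real.log_exp, mul_one_div,
      div_self (ne_of_gt hW1)]
  -- key pointwise bound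
  have hkey : ∀ i, (b i:ℝ) * (lam ^ (1/((b i:ℝ)+1)) - 1) ≤ (W+1) * c := by
    intro i
    rw [← hlam_rpow]
    exact aux_key lam W (b i) hW hlam1 (hwidth i)
  -- potential
  set Φ : ℕ → ℝ := fun ℓ => ∑ i, (b i : ℝ) * w i ℓ with hΦ
  have hΦpos : ∀ ℓ, 0 < Φ ℓ := fun ℓ => by
    haveI : Nonempty (Fin m) := ⟨⟨0, by omega⟩⟩
    exact Finset.sum_pos (fun i _ => mul_pos (hb0 i) (hw_pos i ℓ)) Finset.univ_nonempty
  have hΦ0 : Φ 0 = m := by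
    have hone : ∀ i : Fin m, (b i : ℝ) * w i 0 = 1 := by
      intro i
      rw [hw, hS0, Finset.sum_empty, zero_div, Real.rpow_zero, mul_one, mul_one_div]
      exact div_self (ne_of_gt (hb0 i))
    show (∑ i : Fin m, (b i : ℝ) * w i 0) = m
    rw [Finset.sum_congr rfl (fun i _ => hone i)]
    simp
  set D : ℝ := f Sstar - f (S t) with hDdef
  have hD : 0 < D := by simp [hDdef]; linarith
  -- chain monotonicity
  have hchain_sub : ∀ d k, k + d ≤ t → S k ⊆ S (k + d) := by
    intro d
    induction d with
    | zero => intro k _; simp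
    | succ d ih =>
      intro k hk
      have h1 := ih k (by omega)
      obtain ⟨_, hSe⟩ := hchain (k+d+1) (by omega) (by omega)
      have he : (k+d+1) - 1 = k+d := by omega
      rw [he] at hSe
      have : k + (d+1) = k+d+1 := by omega
      rw [this, hSe]
      exact h1.trans (Finset.subset_insert _ _)
  have hsub_t : ∀ k, k ≤ t → S k ⊆ S t := by
    intro k hk
    have := hchain_sub (t - k) k (by omega)
    rwa [show k + (t-k) = t by omega] at this
  -- per-step growth
  have hstep : ∀ k, k + 1 ≤ t →
      Φ (k+1) ≤ Φ k * Real.exp ((W+1) * c * (f (S (k+1)) - f (S k)) / D) := by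
    intro k hk
    obtain ⟨hγ, hSk⟩ := hchain (k+1) (by omega) hk
    have he : (k+1) - 1 = k := by omega
    rw [he] at hγ hSk
    have hδk := hδ (k+1) (by omega) hk
    rw [he] at hδk
    set δ : ℝ := f (S (k+1)) - f (S k) with hδdef
    set G : ℝ := ∑ i, A i (γ (k+1)) * w i k with hG
    have hG0 : 0 ≤ G :=
      Finset.sum_nonneg (fun i _ => mul_nonneg (hA0 i _) (le_of_lt (hw_pos i k)))
    -- (a) D * G ≤ δ * Φ k
    have hDG : D * G ≤ δ * Φ k := by
      set M : ℝ := ∑ j ∈ Sstar \ S k, (f (insert j (S k)) - f (S k)) with hM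
      have hDM : D ≤ M := by
        have h1 : Sstar ⊆ S k ∪ (Sstar \ S k) := by
          intro x hx
          simp only [Finset.mem_union, Finset.mem_sdiff]
          by_cases hxk : x ∈ S k
          · left; exact hxk
          · right; exact ⟨hx, hxk⟩
        have h2 := hf_mono _ _ h1
        have h3 := aux_submod f hf_mono hf_submod (S k) (Sstar \ S k)
        have h4 := hf_mono _ _ (hsub_t k (by omega))
        simp only [hDdef, hM]
        linarith
      have hMG : M * G ≤ δ * Φ k := by
        have h1 : M * G = ∑ j ∈ Sstar \ S k,
            (f (insert j (S k)) - f (S k)) * G := by rw [hM, Finset.sum_mul]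
        have h2 : ∀ j ∈ Sstar \ S k,
            (f (insert j (S k)) - f (S k)) * G ≤ δ * ∑ i, A i j * w i k := by
          intro j hj
          have hjk : j ∉ S k := (Finset.mem_sdiff.mp hj).2
          have := hgreedy (k+1) (by omega) hk j (by rwa [he])
          rw [he] at this
          exact this
        have h3 : M * G ≤ ∑ j ∈ Sstar \ S k, δ * ∑ i, A i j * w i k := by
          rw [h1]; exact Finset.sum_le_sum h2
        have h4 : ∑ j ∈ Sstar \ S k, δ * ∑ i, A i j * w i k
            = δ * ∑ i, (∑ j ∈ Sstar \ S k, A i j) * w i k := by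
          rw [← Finset.mul_sum]
          congr 1
          rw [Finset.sum_comm]
          congr 1; ext j
          rw [Finset.sum_mul]
        have h5 : ∑ i, (∑ j ∈ Sstar \ S k, A i j) * w i k ≤ Φ k := by
          apply Finset.sum_le_sum
          intro i _
          apply mul_le_mul_of_nonneg_right _ (le_of_lt (hw_pos i k))
          calc ∑ j ∈ Sstar \ S k, A i j
              ≤ ∑ j ∈ Sstar, A i j :=
                Finset.sum_le_sum_of_subset_of_nonneg (Finset.sdiff_subset)
                  (fun j _ _ => hA0 i j)
            _ ≤ (b i : ℝ) := hfeas i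
        calc M * G ≤ δ * ∑ i, (∑ j ∈ Sstar \ S k, A i j) * w i k := by rw [← h4]; exact h3
          _ ≤ δ * Φ k := mul_le_mul_of_nonneg_left h5 (le_of_lt hδk)
      calc D * G ≤ M * G := mul_le_mul_of_nonneg_right hDM hG0
        _ ≤ δ * Φ k := hMG
    -- (b) growth bound
    have hgrow : Φ (k+1) ≤ Φ k + (W+1) * c * G := by
      have hper : ∀ i : Fin m, (b i : ℝ) * w i (k+1)
          ≤ (b i : ℝ) * w i k + (W+1) * c * (A i (γ (k+1)) * w i k) := by
        intro i
        have hsum : (∑ j ∈ S (k+1), A i j)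
            = A i (γ (k+1)) + ∑ j ∈ S k, A i j := by
          rw [hSk, Finset.sum_insert hγ]
        have hwk1 : w i (k+1) = (1 / (b i : ℝ)) *
            (lam ^ ((A i (γ (k+1))) / ((b i:ℝ)+1)) *
             lam ^ ((∑ j ∈ S k, A i j) / ((b i:ℝ)+1))) := by
          rw [hw, hsum, add_div, Real.rpow_add hlam0]
        rcases hA i (γ (k+1)) with h0 | h1
        · rw [hwk1, h0]
          simp only [zero_div, Real.rpow_zero, one_mul, zero_mul, mul_zero, add_zero]
          rw [← hw]
        · rw [hwk1, h1]
          rw [hw i k]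
          have hwik : (0:ℝ) < (1 / (b i : ℝ)) * lam ^ ((∑ j ∈ S k, A i j) / ((b i:ℝ)+1)) := by
            rw [← hw i k]; exact hw_pos i k
          have hkeyi := hkey i
          have hbi := hb0 i
          set P : ℝ := lam ^ ((∑ j ∈ S k, A i j) / ((b i:ℝ)+1)) with hP
          set L : ℝ := lam ^ ((1:ℝ) / ((b i:ℝ)+1)) with hL
          have hP0 : 0 < P := Real.rpow_pos_of_pos hlam0 _
          -- goal: b * (1/b * (L * P)) ≤ b * (1/b * P) + (W+1)*c*(1 * (1/b * P))
          have hbinv : (b i : ℝ) * (1 / (b i : ℝ)) = 1 := by field_simp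
          have lhs_eq : (b i : ℝ) * ((1 / (b i : ℝ)) * (L * P)) = L * P := by
            field_simp
          have rhs_eq : (b i : ℝ) * ((1 / (b i : ℝ)) * P)
              + (W+1) * c * (1 * ((1 / (b i : ℝ)) * P))
              = P + (W+1) * c * (1 / (b i : ℝ)) * P := by field_simp; try ring
          rw [lhs_eq, rhs_eq]
          -- from hkeyi : b i * (L - 1) ≤ (W+1)*c
          have h2 : (b i:ℝ) * (L - 1) ≤ (W+1)*c := hkeyi
          have h3 : L * P - P = (L - 1) * P := by ring
          have h4 : (L - 1) * P ≤ ((W+1)*c / (b i:ℝ)) * P := by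
            apply mul_le_mul_of_nonneg_right _ (le_of_lt hP0)
            rw [le_div_iff₀ hbi]
            nlinarith
          have h5 : ((W+1)*c / (b i:ℝ)) * P = (W+1) * c * (1 / (b i : ℝ)) * P := by
            ring
          linarith [h4, h5.le, h5.ge]
      calc Φ (k+1) = ∑ i, (b i : ℝ) * w i (k+1) := rfl
        _ ≤ ∑ i, ((b i : ℝ) * w i k + (W+1) * c * (A i (γ (k+1)) * w i k)) :=
            Finset.sum_le_sum (fun i _ => hper i)
        _ = Φ k + (W+1) * c * G := by
            rw [Finset.sum_add_distrib, ← Finset.mul_sum, hG, hΦ]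
    -- combine
    have hGle : G ≤ δ * Φ k / D := by
      rw [le_div_iff₀ hD, mul_comm]
      exact hDG
    have hx : Φ (k+1) ≤ Φ k * (1 + (W+1) * c * δ / D) := by
      have h1 : (W+1)*c*G ≤ (W+1)*c*(δ * Φ k / D) :=
        mul_le_mul_of_nonneg_left hGle (by positivity)
      have h2 : Φ k * (1 + (W+1) * c * δ / D) = Φ k + (W+1)*c*(δ * Φ k / D) := by
        ring
      linarith
    calc Φ (k+1) ≤ Φ k * (1 + (W+1) * c * δ / D) := hx
      _ ≤ Φ k * Real.exp ((W+1) * c * δ / D) := by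
          apply mul_le_mul_of_nonneg_left _ (le_of_lt (hΦpos k))
          linarith [Real.add_one_le_exp ((W+1) * c * δ / D)]
  -- telescoping
  have hind : ∀ k, k ≤ t → Φ k ≤ Φ 0 * Real.exp ((W+1) * c * (f (S k) - f (S 0)) / D) := by
    intro k
    induction k with
    | zero => intro _; simp
    | succ k ih =>
      intro hk
      have h1 := ih (by omega)
      have h2 := hstep k hk
      calc Φ (k+1) ≤ Φ k * Real.exp ((W+1) * c * (f (S (k+1)) - f (S k)) / D) := h2
        _ ≤ (Φ 0 * Real.exp ((W+1) * c * (f (S k) - f (S 0)) / D))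
            * Real.exp ((W+1) * c * (f (S (k+1)) - f (S k)) / D) :=
            mul_le_mul_of_nonneg_right h1 (le_of_lt (Real.exp_pos _))
        _ = Φ 0 * Real.exp ((W+1) * c * (f (S (k+1)) - f (S 0)) / D) := by
            rw [mul_assoc, ← Real.exp_add]
            congr 2
            ring
  -- conclude
  have hft : Φ t ≤ (m:ℝ) * Real.exp ((W+1) * c * f (S t) / D) := by
    have := hind t (le_refl t)
    rw [hΦ0, hS0, hf_norm, sub_zero] at this
    exact this
  have htermΦ : Real.exp (W+1) * m ≤ Φ t := hterm
  have hexp_le : Real.exp (W+1) ≤ Real.exp ((W+1) * c * f (S t) / D) := by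
    have h1 : Real.exp (W+1) * m ≤ (m:ℝ) * Real.exp ((W+1) * c * f (S t) / D) :=
      le_trans htermΦ hft
    nlinarith
  have hlog : W + 1 ≤ (W+1) * c * f (S t) / D := by
    have := Real.exp_le_exp.mp hexp_le
    exact this
  have hDle : D ≤ c * f (S t) := by
    rw [le_div_iff₀ hD] at hlog
    nlinarith
  have hfinal : f Sstar ≤ f (S t) * (c + 1) := by
    simp only [hDdef] at hDle
    nlinarith
  rw [ge_iff_le, div_le_iff₀ (by positivity : (0:ℝ) < c + 1)]
  exact hfinal
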